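/- Let n = 2m and K_n be the number of returns to the origin of symmetric simple random walk up to time n. Then E[K_n] = (2m+1)·2^{-2m}·C(2m,m) - 1, and consequently E[K_n] ≤ sqrt(2n/π). -/

import Mathlib

open Finset Real Stirling

private lemma pascal_half (N J : ℕ) :
    ∑ j ∈ range (J+1), Nat.choose (N+1) j
      = 2 * ∑ j ∈ range J, Nat.choose N j + Nat.choose N J := by
  induction J with
  | zero => simp
  | succ J ih =>
      rw [sum_range_succ, ih, Nat.choose_succ_succ, sum_range_succ]
      ring

private lemma g_add (m : ℕ) : ∀ k, k ≤ m + 1 →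
    (∑ r ∈ range k, Nat.choose (2*m - r) m * 2^r)
      + 2^k * (∑ j ∈ range (m+1-k), Nat.choose (2*m+1-k) j) = 4^m := by
  intro k
  induction k with
  | zero => intro _; simpa using Nat.sum_range_choose_halfway m
  | succ k ih =>
      intro hk
      have hk' : k ≤ m := by omega
      have e1 : m + 1 - k = (m - k) + 1 := by omega
      have e2 : 2*m + 1 - k = (2*m - k) + 1 := by omega
      have e3 : m + 1 - (k+1) = m - k := by omega
      have e4 : 2*m + 1 - (k+1) = 2*m - k := by omega
      have hsymm : Nat.choose (2*m - k) (m - k) = Nat.choose (2*m - k) m := by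
        rw [← Nat.choose_symm (show m ≤ 2*m - k by omega)]
        congr 1
        omega
      rw [sum_range_succ, e3, e4, ← ih (by omega), e1, e2, pascal_half, hsymm]
      ring

private lemma s_lemma (m : ℕ) (hm : 0 < m) : ∀ k, k ≤ m + 1 →
    (∑ r ∈ range k, r * Nat.choose (2*m - r) m * 2^r)
      + (2*m + 1 - k) * Nat.choose (2*m - k) m * 2^k
      + (∑ r ∈ range k, Nat.choose (2*m - r) m * 2^r)
      = (2*m + 1) * Nat.choose (2*m) m := by
  intro k
  induction k with
  | zero => simp
  | succ k ih =>
      intro hk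
      have hk' : k ≤ m := by omega
      have key' : (2*m - k) * Nat.choose (2*m - k - 1) m
          = (m - k) * Nat.choose (2*m - k) m := by
        have h := Nat.choose_mul_succ_eq (2*m - k - 1) m
        have e : 2*m - k - 1 + 1 = 2*m - k := by omega
        rw [e] at h
        have e' : 2*m - k - m = m - k := by omega
        rw [e'] at h
        rw [mul_comm, h, mul_comm]
      have e5 : 2*m + 1 - (k+1) = 2*m - k := by omega
      have e6 : 2*m - (k+1) = 2*m - k - 1 := by omega
      have h5 : 2*m + 1 - k = k + 2*(m - k) + 1 := by omega
      rw [sum_range_succ, sum_range_succ, e5, e6, ← ih (by omega), h5, key']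
      ring

private lemma s_total (m : ℕ) (hm : 0 < m) :
    (∑ r ∈ range (m+1), r * Nat.choose (2*m - r) m * 2^r) + 4^m
      = (2*m + 1) * Nat.choose (2*m) m := by
  have h := s_lemma m hm (m+1) le_rfl
  have hg := g_add m (m+1) le_rfl
  have h0 : Nat.choose (2*m - (m+1)) m = 0 := Nat.choose_eq_zero_of_lt (by omega)
  simp [h0] at h
  simp at hg
  omega

/-- The pmf of the number of returns to the origin of simple random walk up to time `2m`:
`p r = 2^{-(2m-r)} * C(2m-r, m)`. -/
noncomputable def returnsPMF (m r : ℕ) : ℝ := (Nat.choose (2*m - r) m : ℝ) / 2^(2*m - r)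

theorem stmt16 (m : ℕ) (hm : 0 < m) :
    (∑ r ∈ Finset.range (m+1), (r : ℝ) * returnsPMF m r) =
        (2*(m:ℝ) + 1) * (Nat.choose (2*m) m : ℝ) / 2^(2*m) - 1 ∧
    (∑ r ∈ Finset.range (m+1), (r : ℝ) * returnsPMF m r) ≤
        Real.sqrt (2 * (2*(m:ℝ)) / Real.pi) := by
  have hm0 : (0:ℝ) < m := by exact_mod_cast hm
  -- Part 1: the exact expectation
  have hS : (∑ r ∈ Finset.range (m+1), (r : ℝ) * returnsPMF m r)
      = ((∑ r ∈ range (m+1), r * Nat.choose (2*m - r) m * 2^r : ℕ) : ℝ) / 2^(2*m) := by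
    push_cast
    rw [Finset.sum_div]
    refine Finset.sum_congr rfl fun r hr => ?_
    have hr2 : r ≤ 2*m := by
      have := Finset.mem_range.1 hr; omega
    unfold returnsPMF
    have h2 : (2:ℝ)^(2*m) = 2^(2*m - r) * 2^r := by
      rw [← pow_add]; congr 1; omega
    rw [mul_div_assoc', div_eq_div_iff (by positivity) (by positivity), h2]
    ring
  have hkey := s_total m hm
  have hkeyR : ((∑ r ∈ range (m+1), r * Nat.choose (2*m - r) m * 2^r : ℕ) : ℝ)
      = (2*(m:ℝ) + 1) * (Nat.choose (2*m) m : ℝ) - 4^m := by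
    have h := congrArg (Nat.cast (R := ℝ)) hkey
    push_cast at h ⊢
    linarith
  have h4 : (4:ℝ)^m = 2^(2*m) := by
    rw [show (4:ℝ) = 2^2 by norm_num, ← pow_mul]
  have hEq : (∑ r ∈ Finset.range (m+1), (r : ℝ) * returnsPMF m r)
      = (2*(m:ℝ) + 1) * (Nat.choose (2*m) m : ℝ) / 2^(2*m) - 1 := by
    rw [hS, hkeyR, h4, sub_div, div_self (by positivity)]
  refine ⟨hEq, ?_⟩
  rw [hEq]
  -- Part 2: the upper bound
  have hApos : 0 < stirlingSeq m := by
    have := Stirling.stirlingSeq'_pos (m - 1)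
    rwa [show m - 1 + 1 = m by omega] at this
  have hA2pos : 0 < stirlingSeq (2*m) := by
    have := Stirling.stirlingSeq'_pos (2*m - 1)
    rwa [show 2*m - 1 + 1 = 2*m by omega] at this
  have hAnti : stirlingSeq (2*m) ≤ stirlingSeq m := by
    have := Stirling.stirlingSeq'_antitone (show m - 1 ≤ 2*m - 1 by omega)
    simpa [Function.comp, show m - 1 + 1 = m by omega, show 2*m - 1 + 1 = 2*m by omega]
      using this
  have hpiA : Real.sqrt π ≤ stirlingSeq m := by
    refine le_of_tendsto Stirling.tendsto_stirlingSeq_sqrt_pi ?_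
    filter_upwards [Filter.eventually_ge_atTop m] with k hk
    have := Stirling.stirlingSeq'_antitone (show m - 1 ≤ k - 1 by omega)
    simpa [Function.comp, show m - 1 + 1 = m by omega, show k - 1 + 1 = k by omega]
      using this
  have hsm : (0:ℝ) < Real.sqrt m := Real.sqrt_pos.2 hm0
  have hfact : (Nat.choose (2*m) m : ℝ) * (Nat.factorial m : ℝ) * (Nat.factorial m : ℝ) = (Nat.factorial (2*m) : ℝ) := by
    have h := Nat.choose_mul_factorial_mul_factorial (show m ≤ 2*m by omega)
    rw [show 2*m - m = m by omega] at h
    exact_mod_cast h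
  have hP : (0:ℝ) < ((m:ℝ)/Real.exp 1)^m := pow_pos (div_pos hm0 (Real.exp_pos 1)) m
  have hQ : (0:ℝ) < Real.sqrt (2*(m:ℝ)) := Real.sqrt_pos.2 (by linarith)
  have hQ2 : Real.sqrt (2*(m:ℝ)) ^ 2 = 2*(m:ℝ) := Real.sq_sqrt (by linarith)
  have hsm2 : Real.sqrt (m:ℝ) ^ 2 = (m:ℝ) := Real.sq_sqrt (le_of_lt hm0)
  have hS4 : Real.sqrt (2*((2*m:ℕ):ℝ)) = 2 * Real.sqrt m := by
    push_cast
    rw [show 2*(2*(m:ℝ)) = 2^2 * m by ring, Real.sqrt_mul (by norm_num), Real.sqrt_sq (by norm_num)]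
  have hP2 : (((2*m:ℕ):ℝ)/Real.exp 1)^(2*m) = 2^(2*m) * (((m:ℝ)/Real.exp 1)^m)^2 := by
    push_cast
    rw [show 2*(m:ℝ)/Real.exp 1 = 2 * ((m:ℝ)/Real.exp 1) by ring, mul_pow, ← pow_mul,
      show m*2 = 2*m by ring]
  have hA : stirlingSeq m = (Nat.factorial m : ℝ) / (Real.sqrt (2*(m:ℝ)) * ((m:ℝ)/Real.exp 1)^m) := rfl
  have hA2 : stirlingSeq (2*m)
      = (Nat.factorial (2*m) : ℝ) / (Real.sqrt (2*((2*m:ℕ):ℝ)) * (((2*m:ℕ):ℝ)/Real.exp 1)^(2*m)) := rfl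
  have hF : (Nat.factorial m : ℝ)
      = stirlingSeq m * (Real.sqrt (2*(m:ℝ)) * ((m:ℝ)/Real.exp 1)^m) := by
    rw [hA]; field_simp
  have hF2 : (Nat.factorial (2*m) : ℝ)
      = stirlingSeq (2*m) * (2 * Real.sqrt m * (2^(2*m) * (((m:ℝ)/Real.exp 1)^m)^2)) := by
    rw [hA2, hS4, hP2]
    field_simp
  have h1 : (Nat.choose (2*m) m : ℝ)
        * (stirlingSeq m * (Real.sqrt (2*(m:ℝ)) * ((m:ℝ)/Real.exp 1)^m))
        * (stirlingSeq m * (Real.sqrt (2*(m:ℝ)) * ((m:ℝ)/Real.exp 1)^m))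
      = stirlingSeq (2*m) * (2 * Real.sqrt m * (2^(2*m) * (((m:ℝ)/Real.exp 1)^m)^2)) := by
    rw [← hF, ← hF2]; exact hfact
  have hmain : (Nat.choose (2*m) m : ℝ) * (stirlingSeq m ^ 2 * Real.sqrt m)
      = stirlingSeq (2*m) * 2^(2*m) := by
    have hne : (2 * Real.sqrt m * (((m:ℝ)/Real.exp 1)^m)^2) ≠ 0 := by
      have : (0:ℝ) < 2 * Real.sqrt m * (((m:ℝ)/Real.exp 1)^m)^2 :=
        mul_pos (by linarith) (pow_pos hP 2)
      exact ne_of_gt this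
    apply mul_right_cancel₀ hne
    calc (Nat.choose (2*m) m : ℝ) * (stirlingSeq m ^ 2 * Real.sqrt m)
          * (2 * Real.sqrt m * (((m:ℝ)/Real.exp 1)^m)^2)
        = (Nat.choose (2*m) m : ℝ) * stirlingSeq m ^ 2 * (2 * Real.sqrt m ^ 2)
            * (((m:ℝ)/Real.exp 1)^m)^2 := by ring
      _ = (Nat.choose (2*m) m : ℝ) * stirlingSeq m ^ 2 * (2 * (m:ℝ))
            * (((m:ℝ)/Real.exp 1)^m)^2 := by rw [hsm2]
      _ = (Nat.choose (2*m) m : ℝ) * stirlingSeq m ^ 2 * Real.sqrt (2*(m:ℝ)) ^ 2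
            * (((m:ℝ)/Real.exp 1)^m)^2 := by rw [hQ2]
      _ = (Nat.choose (2*m) m : ℝ)
            * (stirlingSeq m * (Real.sqrt (2*(m:ℝ)) * ((m:ℝ)/Real.exp 1)^m))
            * (stirlingSeq m * (Real.sqrt (2*(m:ℝ)) * ((m:ℝ)/Real.exp 1)^m)) := by ring
      _ = stirlingSeq (2*m) * (2 * Real.sqrt m * (2^(2*m) * (((m:ℝ)/Real.exp 1)^m)^2)) := h1
      _ = stirlingSeq (2*m) * 2^(2*m) * (2 * Real.sqrt m * (((m:ℝ)/Real.exp 1)^m)^2) := by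
            ring
  have hC4 : (Nat.choose (2*m) m : ℝ) / 2^(2*m)
      = stirlingSeq (2*m) / (stirlingSeq m ^ 2 * Real.sqrt m) := by
    rw [div_eq_div_iff (by positivity) (ne_of_gt (mul_pos (pow_pos hApos 2) hsm))]
    exact hmain
  have hCle : (Nat.choose (2*m) m : ℝ) / 2^(2*m) ≤ 1 / Real.sqrt (π * m) := by
    rw [hC4, Real.sqrt_mul (le_of_lt Real.pi_pos)]
    have hπ : (0:ℝ) < Real.sqrt π := Real.sqrt_pos.2 Real.pi_pos
    calc stirlingSeq (2*m) / (stirlingSeq m ^ 2 * Real.sqrt m)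
        ≤ stirlingSeq m / (stirlingSeq m ^ 2 * Real.sqrt m) := by
          gcongr
      _ = 1 / (stirlingSeq m * Real.sqrt m) := by
          rw [div_eq_div_iff (ne_of_gt (mul_pos (pow_pos hApos 2) hsm))
            (ne_of_gt (mul_pos hApos hsm))]
          ring
      _ ≤ 1 / (Real.sqrt π * Real.sqrt m) :=
          one_div_le_one_div_of_le (mul_pos hπ hsm)
            (mul_le_mul_of_nonneg_right hpiA hsm.le)
  have hspos : (0:ℝ) < Real.sqrt (π * m) := Real.sqrt_pos.2 (by positivity)
  have hs1 : (1:ℝ) ≤ Real.sqrt (π * m) := by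
    rw [show (1:ℝ) = Real.sqrt 1 by simp]
    apply Real.sqrt_le_sqrt
    have hm1 : (1:ℝ) ≤ m := by exact_mod_cast hm
    nlinarith [Real.pi_gt_three, hm1]
  have hgoal : Real.sqrt (2 * (2*(m:ℝ)) / π) = 2*(m:ℝ) / Real.sqrt (π * m) := by
    rw [show 2 * (2*(m:ℝ)) / π = (2*(m:ℝ) / Real.sqrt (π * m))^2 from ?_,
      Real.sqrt_sq (by positivity)]
    rw [div_pow, Real.sq_sqrt (by positivity)]
    have hπ0 : Real.pi ≠ 0 := ne_of_gt Real.pi_pos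
    have hm0' : (m:ℝ) ≠ 0 := ne_of_gt hm0
    field_simp
  rw [hgoal]
  have hc1 : (2*(m:ℝ) + 1) * ((Nat.choose (2*m) m : ℝ) / 2^(2*m))
      ≤ (2*(m:ℝ) + 1) * (1 / Real.sqrt (π * m)) := by
    gcongr
  have hkey2 : (2*(m:ℝ) + 1) * (1 / Real.sqrt (π * m))
      = 2*(m:ℝ) / Real.sqrt (π * m) + 1 / Real.sqrt (π * m) := by ring
  have h1s : 1 / Real.sqrt (π * m) ≤ 1 := by
    rw [div_le_one hspos]; exact hs1
  have hrw : (2*(m:ℝ) + 1) * (Nat.choose (2*m) m : ℝ) / 2^(2*m)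
      = (2*(m:ℝ) + 1) * ((Nat.choose (2*m) m : ℝ) / 2^(2*m)) := by ring
  rw [hrw]
  linarith
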